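/- Let p and p* be real numbers and n ≥ 0. Define Φ_n(x) = ∑_{k=0}^{n} C(n,k) (p*)_{n−k} · k! · L_k^{(−p−1)}(x) · e^{−x/2} for x > 0. Then for every s ∈ ℂ with Re s > 0, the integral ∫₀^∞ Φ_n(2πx) x^{s−1} dx converges and equals q_n(s) · π^{−s} · Γ(s), where Γ is the Gamma function. -/

import Mathlib

open MeasureTheory Real Set

/-- `qpoly p ps n s` is `n!` times the `n`-th Taylor coefficient at `z = 0` of
`z ↦ (1 - z)^(p+s) * (1 + z)^(ps - s)` (principal branch powers). -/
noncomputable def qpoly (p ps : ℝ) (n : ℕ) (s : ℂ) : ℂ :=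
  iteratedDeriv n (fun z : ℂ => (1 - z) ^ ((p : ℂ) + s) * (1 + z) ^ ((ps : ℂ) - s)) 0

/-- Generalized binomial coefficient `C(w, m) = w(w-1)⋯(w-m+1)/m!` over the reals. -/
noncomputable def genBinomR (w : ℝ) (m : ℕ) : ℝ :=
  (∏ j ∈ Finset.range m, (w - j)) / (m.factorial : ℝ)

/-- The generalized Laguerre polynomial
`L_k^{(α)}(x) = ∑_{j=0}^k ((-1)^j / j!) C(k+α, k-j) x^j`. -/
noncomputable def laguerre (α : ℝ) (k : ℕ) (x : ℝ) : ℝ :=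
  ∑ j ∈ Finset.range (k + 1),
    ((-1 : ℝ) ^ j / (j.factorial : ℝ)) * genBinomR ((k : ℝ) + α) (k - j) * x ^ j

/-- The falling factorial `(x)_m = x(x-1)⋯(x-m+1)`, with `(x)_0 = 1`. -/
noncomputable def fallingFac (x : ℝ) (m : ℕ) : ℝ :=
  ∏ j ∈ Finset.range m, (x - j)

/-- `Φ_n(x) = ∑_{k=0}^n C(n,k) (p*)_{n-k} k! L_k^{(-p-1)}(x) e^{-x/2}`. -/
noncomputable def PhiFun (p ps : ℝ) (n : ℕ) (x : ℝ) : ℝ :=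
  ∑ k ∈ Finset.range (n + 1),
    (n.choose k : ℝ) * fallingFac ps (n - k) * (k.factorial : ℝ) *
      laguerre (-p - 1) k x * Real.exp (-x / 2)

namespace MellinAux

noncomputable def ff (a : ℂ) (m : ℕ) : ℂ := ∏ i ∈ Finset.range m, (a - i)
noncomputable def rr (s : ℂ) (m : ℕ) : ℂ := ∏ i ∈ Finset.range m, (s + i)

lemma ff_zero (a : ℂ) : ff a 0 = 1 := by simp [ff]

lemma ff_succ (a : ℂ) (m : ℕ) : ff a (m + 1) = ff a m * (a - m) :=
  Finset.prod_range_succ _ _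

lemma rr_zero (s : ℂ) : rr s 0 = 1 := by simp [rr]

lemma rr_succ (s : ℂ) (m : ℕ) : rr s (m + 1) = rr s m * (s + m) :=
  Finset.prod_range_succ _ _

lemma ff_top (a : ℂ) (m : ℕ) : ff a (m + 1) = a * ff (a - 1) m := by
  rw [ff, Finset.prod_range_succ']
  rw [Finset.prod_congr rfl (fun i _ => show a - ((i : ℕ) + 1 : ℕ) = (a - 1) - i by
    push_cast; ring)]
  simp [ff, mul_comm]

lemma ff_flip (m : ℕ) (c : ℂ) : ff c m = (-1) ^ m * ff ((m : ℂ) - 1 - c) m := by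
  induction m with
  | zero => simp [ff_zero]
  | succ m ih =>
    have h1 : ((m + 1 : ℕ) : ℂ) - 1 - c = (m : ℂ) - c := by push_cast; ring
    have h2 : ((m : ℂ) - c) - 1 = (m : ℂ) - 1 - c := by ring
    rw [ff_succ, ih, h1, ff_top, h2, pow_succ]
    ring

lemma ff_neg (s : ℂ) (r : ℕ) : ff (-s) r = (-1) ^ r * rr s r := by
  rw [ff, rr, Finset.prod_congr rfl (fun i _ => show -s - (i : ℕ) = (-1) * (s + i) by ring),
    Finset.prod_mul_distrib, Finset.prod_const, Finset.card_range]

lemma pascal_sum (n : ℕ) (g : ℕ → ℂ) :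
    ∑ k ∈ Finset.range (n + 2), ((n + 1).choose k : ℂ) * g k
      = ∑ k ∈ Finset.range (n + 1), (n.choose k : ℂ) * g k
        + ∑ k ∈ Finset.range (n + 1), (n.choose k : ℂ) * g (k + 1) := by
  rw [Finset.sum_range_succ' (fun k => ((n + 1).choose k : ℂ) * g k)]
  have h1 : ∀ k, (((n + 1).choose (k + 1) : ℕ) : ℂ) = (n.choose k : ℂ) + (n.choose (k + 1) : ℂ) := by
    intro k; rw [Nat.choose_succ_succ]; push_cast; ring
  calc (∑ k ∈ Finset.range (n + 1), ((n + 1).choose (k + 1) : ℂ) * g (k + 1))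
        + ((n + 1).choose 0 : ℂ) * g 0
      = (∑ k ∈ Finset.range (n + 1), ((n.choose k : ℂ) * g (k + 1)
          + (n.choose (k + 1) : ℂ) * g (k + 1))) + g 0 := by
        simp only [Nat.choose_zero_right, Nat.cast_one, one_mul]
        congr 1
        exact Finset.sum_congr rfl (fun k _ => by rw [h1]; ring)
    _ = (∑ k ∈ Finset.range (n + 1), (n.choose k : ℂ) * g (k + 1))
          + ((∑ k ∈ Finset.range (n + 1), (n.choose (k + 1) : ℂ) * g (k + 1)) + g 0) := by
        rw [Finset.sum_add_distrib]; ring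
    _ = (∑ k ∈ Finset.range (n + 1), (n.choose k : ℂ) * g (k + 1))
          + ∑ k ∈ Finset.range (n + 2), (n.choose k : ℂ) * g k := by
        rw [Finset.sum_range_succ' (fun k => (n.choose k : ℂ) * g k)]
        simp
    _ = _ := by
        rw [Finset.sum_range_succ (fun k => (n.choose k : ℂ) * g k)]
        simp [Nat.choose_succ_self]
        ring

lemma ff_add (a b : ℂ) : ∀ N : ℕ,
    ff (a + b) N = ∑ r ∈ Finset.range (N + 1), (N.choose r : ℂ) * (ff a r * ff b (N - r)) := by
  intro N
  induction N with
  | zero => simp [ff_zero]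
  | succ N ih =>
    rw [ff_succ, ih, pascal_sum N (fun r => ff a r * ff b (N + 1 - r))]
    rw [Finset.sum_mul]
    rw [← Finset.sum_add_distrib]
    refine Finset.sum_congr rfl (fun r hr => ?_)
    have hrN : r ≤ N := Nat.lt_succ_iff.mp (Finset.mem_range.mp hr)
    have h1 : N + 1 - r = (N - r) + 1 := by omega
    have h2 : ((N - r : ℕ) : ℂ) = (N : ℂ) - r := by
      push_cast [Nat.cast_sub hrN]; ring
    have h3 : N + 1 - (r + 1) = N - r := by omega
    rw [h3, h1, ff_succ, ff_succ, h2]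
    ring

noncomputable def Lfun (k : ℕ) (q s : ℂ) : ℂ :=
  ∑ j ∈ Finset.range (k + 1), (k.choose j : ℂ) * (2 ^ j * rr s j * ff (q - j) (k - j))

noncomputable def Rfun (k : ℕ) (q s : ℂ) : ℂ :=
  ∑ m ∈ Finset.range (k + 1), (k.choose m : ℂ) * (ff (q + s) m * rr s (k - m))

lemma Rfun_rec (k : ℕ) (q s : ℂ) :
    Rfun (k + 1) q s = 2 * (q + s) * Rfun k (q - 1) s - (q - k) * Rfun k q s := by
  rw [Rfun, pascal_sum k (fun m => ff (q + s) m * rr s (k + 1 - m))]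
  rw [Rfun, Rfun, Finset.mul_sum, Finset.mul_sum, ← Finset.sum_sub_distrib,
    ← Finset.sum_add_distrib]
  refine Finset.sum_congr rfl (fun m hm => ?_)
  have hmk : m ≤ k := Nat.lt_succ_iff.mp (Finset.mem_range.mp hm)
  have h1 : k + 1 - m = (k - m) + 1 := by omega
  have h2 : k + 1 - (m + 1) = k - m := by omega
  have h3 : ((k - m : ℕ) : ℂ) = (k : ℂ) - m := by push_cast [Nat.cast_sub hmk]; ring
  have h4 : q - 1 + s = q + s - 1 := by ring
  have h5 : (q + s) * ff (q + s - 1) m = ff (q + s) m * (q + s - m) := by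
    rw [← ff_top, ff_succ]
  rw [h1, h2, rr_succ, ff_succ, h3, h4]
  linear_combination (-2 * (k.choose m : ℂ) * rr s (k - m)) * h5

lemma Lfun_rec (k : ℕ) (q s : ℂ) :
    Lfun (k + 1) q s = 2 * (q + s) * Lfun k (q - 1) s - (q - k) * Lfun k q s := by
  rw [Lfun, pascal_sum k (fun j => 2 ^ j * rr s j * ff (q - j) (k + 1 - j))]
  rw [Lfun, Lfun, Finset.mul_sum, Finset.mul_sum, ← Finset.sum_sub_distrib,
    ← Finset.sum_add_distrib]
  refine Finset.sum_congr rfl (fun j hj => ?_)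
  have hjk : j ≤ k := Nat.lt_succ_iff.mp (Finset.mem_range.mp hj)
  have h1 : k + 1 - j = (k - j) + 1 := by omega
  have h2 : k + 1 - (j + 1) = k - j := by omega
  have h3 : ((k - j : ℕ) : ℂ) = (k : ℂ) - j := by push_cast [Nat.cast_sub hjk]; ring
  have h5 : ff (q - j) ((k - j) + 1) = ff (q - j) (k - j) * (q - k) := by
    rw [ff_succ, h3]; ring_nf
  have h6 : (q - j) * ff (q - j - 1) (k - j) = ff (q - j) (k - j) * (q - k) := by
    rw [← ff_top, h5]
  have h7 : q - ((j + 1 : ℕ) : ℂ) = q - j - 1 := by push_cast; ring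
  have h8 : q - 1 - (j : ℂ) = q - j - 1 := by ring
  rw [h2, h1, h5, rr_succ, h7, h8]
  linear_combination (-2 * (k.choose j : ℂ) * 2 ^ j * rr s j) * h6

lemma Lfun_eq_Rfun (k : ℕ) : ∀ q s : ℂ, Lfun k q s = Rfun k q s := by
  induction k with
  | zero => intro q s; simp [Lfun, Rfun, ff_zero, rr_zero]
  | succ k ih => intro q s; rw [Lfun_rec, Rfun_rec, ih, ih]

lemma inner_eval (n m : ℕ) (A s : ℂ) (hm : m ≤ n) :
    ∑ k ∈ Finset.range (n + 1),
        (n.choose k : ℂ) * (k.choose m : ℂ) * (ff A (n - k) * ff (-s) (k - m))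
      = (n.choose m : ℂ) * ff (A - s) (n - m) := by
  rw [Finset.range_eq_Ico, ← Finset.sum_Ico_consecutive _ (Nat.zero_le m)
    (by omega : m ≤ n + 1)]
  have hzero : ∑ k ∈ Finset.Ico 0 m,
      (n.choose k : ℂ) * (k.choose m : ℂ) * (ff A (n - k) * ff (-s) (k - m)) = 0 :=
    Finset.sum_eq_zero (fun k hk => by
      have : k < m := (Finset.mem_Ico.mp hk).2
      simp [Nat.choose_eq_zero_of_lt this])
  rw [hzero, zero_add, Finset.sum_Ico_eq_sum_range]
  have hn1m : n + 1 - m = (n - m) + 1 := by omega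
  have hAs : A - s = -s + A := by ring
  rw [hn1m, hAs, ff_add (-s) A (n - m), Finset.mul_sum]
  refine Finset.sum_congr rfl (fun r hr => ?_)
  have hrnm : r ≤ n - m := Nat.lt_succ_iff.mp (Finset.mem_range.mp hr)
  have hchoose : n.choose (m + r) * (m + r).choose m = n.choose m * (n - m).choose r := by
    have h := Nat.choose_mul (n := n) (show m ≤ m + r by omega)
    simpa using h
  have e1 : n - (m + r) = n - m - r := by omega
  have e2 : m + r - m = r := by omega
  rw [e1, e2]
  have hc := congrArg (fun t : ℕ => (t : ℂ)) hchoose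
  push_cast at hc
  linear_combination (ff A (n - m - r) * ff (-s) r) * hc

lemma regroup (n : ℕ) (A q s : ℂ) :
    ∑ k ∈ Finset.range (n + 1), (n.choose k : ℂ) * ff A (n - k) * ((-1) ^ k * Rfun k q s)
      = ∑ m ∈ Finset.range (n + 1),
          (n.choose m : ℂ) * ((-1) ^ m * ff (q + s) m * ff (A - s) (n - m)) := by
  have step1 : ∀ k ∈ Finset.range (n + 1),
      (n.choose k : ℂ) * ff A (n - k) * ((-1) ^ k * Rfun k q s)
        = ∑ m ∈ Finset.range (n + 1),
            (-1) ^ m * ff (q + s) m *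
              ((n.choose k : ℂ) * (k.choose m : ℂ) * (ff A (n - k) * ff (-s) (k - m))) := by
    intro k hk
    have hkn : k ≤ n := Nat.lt_succ_iff.mp (Finset.mem_range.mp hk)
    have hsub : Finset.range (k + 1) ⊆ Finset.range (n + 1) :=
      Finset.range_subset_range.mpr (by omega)
    rw [← Finset.sum_subset hsub (fun m _ hm => by
      have hkm : k < m := by
        rcases Nat.lt_or_ge k m with h | h
        · exact h
        · exact absurd (Finset.mem_range.mpr (by omega)) hm
      simp [Nat.choose_eq_zero_of_lt hkm])]
    rw [Rfun, Finset.mul_sum, Finset.mul_sum]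
    refine Finset.sum_congr rfl (fun m hm => ?_)
    have hmk : m ≤ k := Nat.lt_succ_iff.mp (Finset.mem_range.mp hm)
    have hsign : ((-1 : ℂ)) ^ k = (-1) ^ m * (-1) ^ (k - m) := by
      rw [← pow_add]; congr 1; omega
    rw [ff_neg, hsign]
    ring
  rw [Finset.sum_congr rfl step1, Finset.sum_comm]
  refine Finset.sum_congr rfl (fun m hm => ?_)
  have hmn : m ≤ n := Nat.lt_succ_iff.mp (Finset.mem_range.mp hm)
  rw [← Finset.mul_sum, inner_eval n m A s hmn]
  ring

lemma mem_slit_ball {z : ℂ} (hz : z ∈ Metric.ball (0 : ℂ) 1) :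
    (1 - z) ∈ Complex.slitPlane ∧ (1 + z) ∈ Complex.slitPlane := by
  have habs : ‖z‖ < 1 := by
    simpa [Complex.dist_eq] using Metric.mem_ball.mp hz
  have hre : |z.re| < 1 := lt_of_le_of_lt (Complex.abs_re_le_norm z) habs
  rw [abs_lt] at hre
  constructor
  · exact Or.inl (by simp [Complex.sub_re]; linarith [hre.2])
  · exact Or.inl (by simp [Complex.add_re]; linarith [hre.1])

lemma deriv_formula (a b : ℂ) : ∀ n : ℕ, ∀ z ∈ Metric.ball (0 : ℂ) 1,
    iteratedDeriv n (fun w : ℂ => (1 - w) ^ a * (1 + w) ^ b) z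
      = ∑ k ∈ Finset.range (n + 1), (n.choose k : ℂ) *
          ((-1) ^ k * ff a k * ff b (n - k) *
            ((1 - z) ^ (a - k) * (1 + z) ^ (b - n + k))) := by
  intro n
  induction n with
  | zero =>
    intro z hz
    rw [iteratedDeriv_zero]
    simp [ff_zero]
  | succ n ih =>
    intro z hz
    have hball : Metric.ball (0 : ℂ) 1 ∈ nhds z := Metric.isOpen_ball.mem_nhds hz
    have heq : iteratedDeriv n (fun w : ℂ => (1 - w) ^ a * (1 + w) ^ b)
        =ᶠ[nhds z] fun z => ∑ k ∈ Finset.range (n + 1), (n.choose k : ℂ) *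
          ((-1) ^ k * ff a k * ff b (n - k) *
            ((1 - z) ^ (a - k) * (1 + z) ^ (b - n + k))) :=
      Filter.eventuallyEq_of_mem hball (fun w hw => ih w hw)
    rw [iteratedDeriv_succ, heq.deriv_eq]
    obtain ⟨hs1, hs2⟩ := mem_slit_ball hz
    have hderiv : HasDerivAt (fun z : ℂ => ∑ k ∈ Finset.range (n + 1), (n.choose k : ℂ) *
          ((-1) ^ k * ff a k * ff b (n - k) *
            ((1 - z) ^ (a - k) * (1 + z) ^ (b - n + k))))
        (∑ k ∈ Finset.range (n + 1), (n.choose k : ℂ) *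
          ((-1) ^ k * ff a k * ff b (n - k) *
            (((a - k) * (1 - z) ^ (a - k - 1) * (-1)) * (1 + z) ^ (b - n + k)
              + (1 - z) ^ (a - k) * ((b - n + k) * (1 + z) ^ (b - n + k - 1) * 1)))) z := by
      refine HasDerivAt.fun_sum (fun k _ => ?_)
      have hu : HasDerivAt (fun w : ℂ => (1 - w) ^ (a - k))
          ((a - k) * (1 - z) ^ (a - k - 1) * (-1)) z := by
        have hf : HasDerivAt (fun w : ℂ => 1 - w) (-1) z := by
          simpa using (hasDerivAt_id z).const_sub 1
        exact hf.cpow_const hs1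
      have hv : HasDerivAt (fun w : ℂ => (1 + w) ^ (b - n + k))
          ((b - n + k) * (1 + z) ^ (b - n + k - 1) * 1) z := by
        have hg : HasDerivAt (fun w : ℂ => 1 + w) 1 z := by
          simpa using (hasDerivAt_id z).const_add 1
        exact hg.cpow_const hs2
      simpa [mul_assoc, mul_add, mul_comm, mul_left_comm] using
        ((hu.mul hv).const_mul ((n.choose k : ℂ) * ((-1) ^ k * ff a k * ff b (n - k))))
    rw [hderiv.deriv, pascal_sum n (fun k => (-1) ^ k * ff a k * ff b (n + 1 - k) *
        ((1 - z) ^ (a - (k : ℂ)) * (1 + z) ^ (b - ((n + 1 : ℕ) : ℂ) + (k : ℂ))))]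
    rw [← Finset.sum_add_distrib]
    refine Finset.sum_congr rfl (fun k hk => ?_)
    have hkn : k ≤ n := Nat.lt_succ_iff.mp (Finset.mem_range.mp hk)
    have hffb : ff b (n + 1 - k) = ff b (n - k) * (b - ((n - k : ℕ) : ℂ)) := by
      rw [show n + 1 - k = (n - k) + 1 by omega, ff_succ]
    have hcast : ((n - k : ℕ) : ℂ) = (n : ℂ) - k := by push_cast [Nat.cast_sub hkn]; ring
    have hffa : ff a (k + 1) = ff a k * (a - k) := ff_succ a k
    have e1 : a - ((k + 1 : ℕ) : ℂ) = a - k - 1 := by push_cast; ring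
    have e2 : b - ((n + 1 : ℕ) : ℂ) + ((k + 1 : ℕ) : ℂ) = b - n + k := by push_cast; ring
    have e3 : b - ((n + 1 : ℕ) : ℂ) + (k : ℂ) = b - n + k - 1 := by push_cast; ring
    rw [show n + 1 - (k + 1) = n - k from by omega, hffb, hcast, hffa, e1, e2, e3]
    ring

lemma qpoly_explicit (p ps : ℝ) (n : ℕ) (s : ℂ) :
    qpoly p ps n s = ∑ k ∈ Finset.range (n + 1), (n.choose k : ℂ) *
      ((-1) ^ k * ff ((p : ℂ) + s) k * ff ((ps : ℂ) - s) (n - k)) := by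
  rw [qpoly, deriv_formula ((p : ℂ) + s) ((ps : ℂ) - s) n 0 (by simp)]
  refine Finset.sum_congr rfl (fun k hk => ?_)
  simp [Complex.one_cpow]

lemma Gamma_rr {s : ℂ} (hs : 0 < s.re) : ∀ j : ℕ,
    Complex.Gamma (s + j) = rr s j * Complex.Gamma s := by
  intro j
  induction j with
  | zero => simp [rr_zero]
  | succ j ih =>
    have hne : s + (j : ℂ) ≠ 0 := by
      intro h
      have := congrArg Complex.re h
      simp [Complex.add_re] at this
      nlinarith [this, hs]
    have h1 : s + ((j + 1 : ℕ) : ℂ) = (s + j) + 1 := by push_cast; ring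
    rw [h1, Complex.Gamma_add_one _ hne, ih, rr_succ]
    ring

lemma phi_integrable {w : ℂ} (hw : 0 < w.re) :
    IntegrableOn (fun x : ℝ => (x : ℂ) ^ (w - 1) * (Real.exp (-(π * x)) : ℂ))
      (Ioi (0 : ℝ)) := by
  have h0 : IntegrableOn (fun x : ℝ => ((Real.exp (-x) : ℝ) : ℂ) * (x : ℂ) ^ (w - 1))
      (Ioi (0 : ℝ)) := Complex.GammaIntegral_convergent hw
  have h1 : IntegrableOn
      (fun x : ℝ => ((Real.exp (-(π * x)) : ℝ) : ℂ) * ((π * x : ℝ) : ℂ) ^ (w - 1))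
      (Ioi (0 : ℝ)) := by
    have h2 := (integrableOn_Ioi_comp_mul_left_iff
      (fun x : ℝ => ((Real.exp (-x) : ℝ) : ℂ) * (x : ℂ) ^ (w - 1)) 0 pi_pos).mpr
      (by simpa using h0)
    simpa using h2
  have hπ : ((π : ℝ) : ℂ) ≠ 0 := Complex.ofReal_ne_zero.mpr pi_ne_zero
  have hπw : ((π : ℝ) : ℂ) ^ (w - 1) ≠ 0 := by
    simp [Complex.cpow_eq_zero_iff, hπ]
  have h3 : IntegrableOn
      (fun x : ℝ => ((((π : ℝ) : ℂ)) ^ (w - 1))⁻¹ *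
        (((Real.exp (-(π * x)) : ℝ) : ℂ) * ((π * x : ℝ) : ℂ) ^ (w - 1)))
      (Ioi (0 : ℝ)) := h1.const_mul _
  refine h3.congr_fun ?_ measurableSet_Ioi
  intro x hx
  have hx0 : (0 : ℝ) < x := hx
  have hmul : ((π * x : ℝ) : ℂ) ^ (w - 1) = ((π : ℝ) : ℂ) ^ (w - 1) * (x : ℂ) ^ (w - 1) := by
    rw [Complex.ofReal_mul]
    exact Complex.mul_cpow_ofReal_nonneg pi_pos.le hx0.le _
  simp only []
  rw [hmul]
  field_simp

lemma phi_integral {w : ℂ} (hw : 0 < w.re) :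
    ∫ x in Ioi (0 : ℝ), (x : ℂ) ^ (w - 1) * (Real.exp (-(π * x)) : ℂ)
      = ((π : ℝ) : ℂ) ^ (-w) * Complex.Gamma w := by
  have h := Complex.integral_cpow_mul_exp_neg_mul_Ioi hw pi_pos
  have harg : ((π : ℝ) : ℂ).arg ≠ π := by
    rw [Complex.arg_ofReal_of_nonneg pi_pos.le]
    exact fun hc => pi_ne_zero hc.symm
  have hconst : (1 / ((π : ℝ) : ℂ)) ^ w = ((π : ℝ) : ℂ) ^ (-w) := by
    rw [one_div, Complex.inv_cpow _ _ harg, ← Complex.cpow_neg]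
  rw [← hconst, ← h]
  refine setIntegral_congr_fun measurableSet_Ioi (fun x hx => ?_)
  rw [Complex.ofReal_exp]
  push_cast
  ring_nf

lemma fallingFac_cast (x : ℝ) (m : ℕ) :
    ((fallingFac x m : ℝ) : ℂ) = ff (x : ℂ) m := by
  rw [fallingFac, ff]
  push_cast
  rfl

lemma gB_cast (p : ℝ) (k j : ℕ) (hjk : j ≤ k) :
    ((genBinomR ((k : ℝ) + (-p - 1)) (k - j) : ℝ) : ℂ)
      = ((-1) ^ (k - j) * ff ((p : ℂ) - j) (k - j)) / (((k - j).factorial : ℕ) : ℂ) := by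
  rw [genBinomR]
  push_cast
  have h2 : (∏ i ∈ Finset.range (k - j), ((k : ℂ) + (-(p : ℂ) - 1) - i))
      = ff ((k : ℂ) + (-(p : ℂ) - 1)) (k - j) := rfl
  have h3 : ((k - j : ℕ) : ℂ) - 1 - ((k : ℂ) + (-(p : ℂ) - 1)) = (p : ℂ) - j := by
    push_cast [Nat.cast_sub hjk]; ring
  rw [h2, ff_flip (k - j) ((k : ℂ) + (-(p : ℂ) - 1)), h3]

lemma inner_sum (p : ℝ) (k : ℕ) (s : ℂ) :
    ∑ j ∈ Finset.range (k + 1),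
      ((k.factorial : ℂ) * ((-1) ^ j / (j.factorial : ℂ))
        * ((genBinomR ((k : ℝ) + (-p - 1)) (k - j) : ℝ) : ℂ) * (2 * ((π : ℝ) : ℂ)) ^ j)
        * (((((π : ℝ) : ℂ)) ^ j)⁻¹ * rr s j)
      = (-1) ^ k * Lfun k (p : ℂ) s := by
  rw [Lfun, Finset.mul_sum]
  refine Finset.sum_congr rfl (fun j hj => ?_)
  have hjk : j ≤ k := Nat.lt_succ_iff.mp (Finset.mem_range.mp hj)
  have hπ : ((π : ℝ) : ℂ) ≠ 0 := Complex.ofReal_ne_zero.mpr pi_ne_zero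
  have hπj : (((π : ℝ) : ℂ)) ^ j ≠ 0 := pow_ne_zero _ hπ
  have hfact : (k.factorial : ℂ) = (k.choose j : ℂ) * (j.factorial : ℂ) * ((k - j).factorial : ℂ) := by
    exact_mod_cast congrArg (fun t : ℕ => (t : ℂ)) (Nat.choose_mul_factorial_mul_factorial hjk).symm
  have hj0 : (j.factorial : ℂ) ≠ 0 := Nat.cast_ne_zero.mpr (Nat.factorial_ne_zero j)
  have hkj0 : ((k - j).factorial : ℂ) ≠ 0 := Nat.cast_ne_zero.mpr (Nat.factorial_ne_zero (k - j))
  have hsign : ((-1 : ℂ)) ^ j * (-1) ^ (k - j) = (-1) ^ k := by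
    rw [← pow_add]; congr 1; omega
  rw [gB_cast p k j hjk, hfact, mul_pow, ← hsign]
  field_simp

end MellinAux

open MellinAux

theorem mellin_PhiFun (p ps : ℝ) (n : ℕ) (s : ℂ) (hs : 0 < s.re) :
    IntegrableOn (fun x : ℝ => (PhiFun p ps n (2 * π * x) : ℂ) * (x : ℂ) ^ (s - 1))
      (Ioi (0 : ℝ)) ∧
    ∫ x in Ioi (0 : ℝ), (PhiFun p ps n (2 * π * x) : ℂ) * (x : ℂ) ^ (s - 1) =
      qpoly p ps n s * (π : ℂ) ^ (-s) * Complex.Gamma s := by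
  have hπ : ((π : ℝ) : ℂ) ≠ 0 := Complex.ofReal_ne_zero.mpr pi_ne_zero
  set C : ℕ → ℕ → ℂ := fun k j =>
    (n.choose k : ℂ) * ff (ps : ℂ) (n - k) * (k.factorial : ℂ) *
      ((-1) ^ j / (j.factorial : ℂ)) *
      ((genBinomR ((k : ℝ) + (-p - 1)) (k - j) : ℝ) : ℂ) * (2 * ((π : ℝ) : ℂ)) ^ j with hC
  have hdec : ∀ x ∈ Ioi (0 : ℝ),
      (PhiFun p ps n (2 * π * x) : ℂ) * (x : ℂ) ^ (s - 1)
        = ∑ k ∈ Finset.range (n + 1), ∑ j ∈ Finset.range (k + 1),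
            C k j * ((x : ℂ) ^ (s + j - 1) * (Real.exp (-(π * x)) : ℂ)) := by
    intro x hx
    have hx0 : (0 : ℝ) < x := hx
    have hxC : (x : ℂ) ≠ 0 := Complex.ofReal_ne_zero.mpr hx0.ne'
    have hexp : -(2 * π * x) / 2 = -(π * x) := by ring
    simp only [PhiFun, laguerre, hexp]
    push_cast
    rw [Finset.sum_mul]
    refine Finset.sum_congr rfl (fun k hk => ?_)
    rw [Finset.mul_sum, Finset.sum_mul, Finset.sum_mul]
    refine Finset.sum_congr rfl (fun j hj => ?_)
    have hxj : (x : ℂ) ^ (j : ℕ) * (x : ℂ) ^ (s - 1) = (x : ℂ) ^ (s + j - 1) := by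
      rw [← Complex.cpow_natCast, ← Complex.cpow_add _ _ hxC,
        show (j : ℂ) + (s - 1) = s + j - 1 by ring]
    rw [hC]
    simp only [fallingFac_cast]
    rw [mul_pow, mul_pow, ← hxj]
    ring
  have hint : ∀ k ∈ Finset.range (n + 1), ∀ j ∈ Finset.range (k + 1),
      IntegrableOn (fun x : ℝ => C k j * ((x : ℂ) ^ (s + j - 1) * (Real.exp (-(π * x)) : ℂ)))
        (Ioi (0 : ℝ)) := by
    intro k _ j _
    have hre : 0 < (s + (j : ℂ)).re := by
      simp only [Complex.add_re, Complex.natCast_re]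
      positivity
    exact (phi_integrable hre).const_mul _
  have hbig : IntegrableOn
      (fun x : ℝ => ∑ k ∈ Finset.range (n + 1), ∑ j ∈ Finset.range (k + 1),
        C k j * ((x : ℂ) ^ (s + j - 1) * (Real.exp (-(π * x)) : ℂ))) (Ioi (0 : ℝ)) := by
    refine integrable_finset_sum _ (fun k hk => integrable_finset_sum _ (fun j hj => ?_))
    exact hint k hk j hj
  constructor
  · exact hbig.congr_fun (fun x hx => (hdec x hx).symm) measurableSet_Ioi
  · have h1 : ∫ x in Ioi (0 : ℝ), (PhiFun p ps n (2 * π * x) : ℂ) * (x : ℂ) ^ (s - 1)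
        = ∑ k ∈ Finset.range (n + 1), ∑ j ∈ Finset.range (k + 1),
            C k j * (((π : ℝ) : ℂ) ^ (-(s + j)) * Complex.Gamma (s + j)) := by
      rw [setIntegral_congr_fun measurableSet_Ioi hdec,
        integral_finset_sum _ (fun k hk => integrable_finset_sum _ (fun j hj => hint k hk j hj))]
      refine Finset.sum_congr rfl (fun k hk => ?_)
      rw [integral_finset_sum _ (fun j hj => hint k hk j hj)]
      refine Finset.sum_congr rfl (fun j hj => ?_)
      rw [MeasureTheory.integral_const_mul]
      have hre : 0 < (s + (j : ℂ)).re := by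
        simp only [Complex.add_re, Complex.natCast_re]
        positivity
      rw [show s + (j : ℂ) - 1 = (s + j) - 1 by ring]
      rw [phi_integral hre]
    have hπsplit : ∀ j : ℕ, ((π : ℝ) : ℂ) ^ (-(s + (j : ℂ)))
        = ((π : ℝ) : ℂ) ^ (-s) * ((((π : ℝ) : ℂ)) ^ j)⁻¹ := by
      intro j
      rw [show -(s + (j : ℂ)) = (-s) + (-(j : ℂ)) by ring, Complex.cpow_add _ _ hπ]
      congr 1
      rw [Complex.cpow_neg, Complex.cpow_natCast]
    have h2 : ∑ k ∈ Finset.range (n + 1), ∑ j ∈ Finset.range (k + 1),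
          C k j * (((π : ℝ) : ℂ) ^ (-(s + j)) * Complex.Gamma (s + j))
        = (∑ k ∈ Finset.range (n + 1), (n.choose k : ℂ) * ff (ps : ℂ) (n - k) *
            ((-1) ^ k * Lfun k (p : ℂ) s)) * (((π : ℝ) : ℂ) ^ (-s) * Complex.Gamma s) := by
      rw [Finset.sum_mul]
      refine Finset.sum_congr rfl (fun k hk => ?_)
      have := inner_sum p k s
      calc ∑ j ∈ Finset.range (k + 1),
            C k j * (((π : ℝ) : ℂ) ^ (-(s + j)) * Complex.Gamma (s + j))
          = (∑ j ∈ Finset.range (k + 1),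
              ((k.factorial : ℂ) * ((-1) ^ j / (j.factorial : ℂ))
                * ((genBinomR ((k : ℝ) + (-p - 1)) (k - j) : ℝ) : ℂ) * (2 * ((π : ℝ) : ℂ)) ^ j)
                * (((((π : ℝ) : ℂ)) ^ j)⁻¹ * rr s j))
              * ((n.choose k : ℂ) * ff (ps : ℂ) (n - k) * (((π : ℝ) : ℂ) ^ (-s) * Complex.Gamma s)) := by
            rw [Finset.sum_mul]
            refine Finset.sum_congr rfl (fun j hj => ?_)
            rw [hC, hπsplit j, Gamma_rr hs j]
            ring
        _ = _ := by rw [this]; ring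
    rw [h1, h2]
    have h3 : ∑ k ∈ Finset.range (n + 1), (n.choose k : ℂ) * ff (ps : ℂ) (n - k) *
          ((-1) ^ k * Lfun k (p : ℂ) s) = qpoly p ps n s := by
      rw [Finset.sum_congr rfl (fun k _ => by rw [Lfun_eq_Rfun k (p : ℂ) s]),
        regroup n (ps : ℂ) (p : ℂ) s, qpoly_explicit]
    rw [h3]
    rw [← mul_assoc]
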